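/- Let α, β, γ, c, A be real numbers with α > 0 and γ ≠ 0. If (β+c)² + 2Aγ < 0, then the vector field f(φ,ψ) := (ψ, (−A + (β+c)φ + (γ/2)φ²)/α) has no zeros (so the system (★) has no stationary points), and every solution (φ, ψ) of (★) defined on all of ℝ is unbounded (i.e., the curve y ↦ (φ(y), ψ(y)) is not contained in any bounded subset of ℝ²). -/

import Mathlib

/-- If `(β+c)² + 2Aγ < 0` then the vector field
`f(φ,ψ) = (ψ, (−A + (β+c)φ + (γ/2)φ²)/α)` has no zeros (no stationary points of (★)),
and every global solution of (★) is unbounded. -/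
theorem stmt_3 (α β γ c A : ℝ) (hα : 0 < α) (hγ : γ ≠ 0)
    (hD : (β + c) ^ 2 + 2 * A * γ < 0)
    (f : ℝ × ℝ → ℝ × ℝ)
    (hf : ∀ p : ℝ × ℝ, f p = (p.2, (-A + (β + c) * p.1 + γ / 2 * p.1 ^ 2) / α)) :
    (∀ p : ℝ × ℝ, f p ≠ 0) ∧
    (∀ φ ψ : ℝ → ℝ,
      (∀ y : ℝ, HasDerivAt φ (ψ y) y) →
      (∀ y : ℝ, HasDerivAt ψ ((-A + (β + c) * φ y + γ / 2 * (φ y) ^ 2) / α) y) →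
      ¬ Bornology.IsBounded (Set.range fun y : ℝ => (φ y, ψ y))) := by
  set m : ℝ := -((β + c) ^ 2 + 2 * A * γ) / 2 with hm
  have hmpos : 0 < m := by simp only [hm]; linarith
  -- key inequality: γ * Q(x) ≥ m for all x
  have key : ∀ x : ℝ, m ≤ γ * (-A + (β + c) * x + γ / 2 * x ^ 2) := by
    intro x
    nlinarith [sq_nonneg (γ * x + (β + c))]
  constructor
  · intro p hp
    rw [hf p, Prod.ext_iff] at hp
    have h2 : (-A + (β + c) * p.1 + γ / 2 * p.1 ^ 2) / α = 0 := hp.2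
    have hQ : -A + (β + c) * p.1 + γ / 2 * p.1 ^ 2 = 0 := by
      field_simp at h2; linarith
    have := key p.1
    rw [hQ] at this
    simp at this
    linarith
  · intro φ ψ hφ hψ hb
    -- h y := γ * ψ y - (m/α) * y is monotone
    set h : ℝ → ℝ := fun y => γ * ψ y - m / α * y with hh
    have hderiv : ∀ y, HasDerivAt h
        (γ * ((-A + (β + c) * φ y + γ / 2 * (φ y) ^ 2) / α) - m / α) y := by
      intro y
      exact ((hψ y).const_mul γ).sub (((hasDerivAt_id y).const_mul (m / α)).congr_deriv
        (by ring))
    have hmono : Monotone h := by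
      apply monotone_of_deriv_nonneg
      · exact fun y => (hderiv y).differentiableAt
      · intro y
        rw [(hderiv y).deriv]
        have := key (φ y)
        have h1 : m / α ≤ γ * ((-A + (β + c) * φ y + γ / 2 * (φ y) ^ 2) / α) := by
          rw [mul_div_assoc']
          gcongr
        linarith
    -- boundedness gives a uniform bound on |ψ y|
    obtain ⟨R, hR⟩ := (Metric.isBounded_iff_subset_closedBall 0).mp hb
    have hbound : ∀ y : ℝ, |ψ y| ≤ R := by
      intro y
      have : (φ y, ψ y) ∈ Metric.closedBall (0 : ℝ × ℝ) R := hR ⟨y, rfl⟩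
      rw [Metric.mem_closedBall, dist_zero_right] at this
      calc |ψ y| = ‖(φ y, ψ y).2‖ := rfl
        _ ≤ ‖(φ y, ψ y)‖ := norm_snd_le _
        _ ≤ R := this
    -- choose a large y
    have hmα : 0 < m / α := div_pos hmpos hα
    set y₀ : ℝ := (|γ| * R + |γ * ψ 0| + 1) * (α / m) with hy₀
    have hy₀nonneg : 0 ≤ y₀ := by
      apply mul_nonneg
      · have : 0 ≤ |γ| * R := mul_nonneg (abs_nonneg _) ((abs_nonneg (ψ 0)).trans (hbound 0))
        positivity
      · positivity
    have hmono' : h 0 ≤ h y₀ := hmono hy₀nonneg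
    have hyval : m / α * y₀ = |γ| * R + |γ * ψ 0| + 1 := by
      field_simp [hy₀]
      rw [hy₀, mul_comm m, mul_assoc, div_mul_cancel₀ α hmpos.ne']; ring
    have h1 : γ * ψ 0 ≤ γ * ψ y₀ - (|γ| * R + |γ * ψ 0| + 1) := by
      have := hmono'
      simp only [hh] at this
      rw [mul_zero, sub_zero] at this
      linarith [hyval ▸ this]
    have h2 : γ * ψ y₀ ≤ |γ| * R := by
      calc γ * ψ y₀ ≤ |γ * ψ y₀| := le_abs_self _
        _ = |γ| * |ψ y₀| := abs_mul _ _
        _ ≤ |γ| * R := by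
            exact mul_le_mul_of_nonneg_left (hbound y₀) (abs_nonneg _)
    have h3 : -(|γ * ψ 0|) ≤ γ * ψ 0 := neg_abs_le _
    linarith
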